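/- Let s be a disjoint sequence in F containing, for every n, n-element completely meshed subsequences occurring arbitrarily late. If A ⊆ ω meets min[FU(s)] in an infinite set and B ⊆ ω meets max[FU(s)] in an infinite set, then min⁻¹[A] ∩ max⁻¹[B] is s-meshed. -/

import Mathlib

open Finset

/-- `FU t` : the set of finite unions of an infinite sequence `t` in `F`. -/
def FU (t : ℕ → Finset ℕ) : Set (Finset ℕ) :=
  {x | ∃ v : Finset ℕ, v.Nonempty ∧ x = v.biUnion t}

/-- a sequence of nonempty pairwise disjoint finite sets. -/
def IsDisjointSeq (t : ℕ → Finset ℕ) : Prop :=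
  (∀ i, (t i).Nonempty) ∧ Pairwise (Function.onFun Disjoint t)

/-- `ordLT s t` : `max s < min t`, i.e. every element of `s` is below every element of `t`. -/
def ordLT (s t : Finset ℕ) : Prop := ∀ a ∈ s, ∀ b ∈ t, a < b

/-- two sets mesh if neither lies entirely below the other. -/
def Mesh (s t : Finset ℕ) : Prop := ¬ ordLT s t ∧ ¬ ordLT t s

/-- finite unions of a finite sequence. -/
def FUfin {n : ℕ} (t : Fin n → Finset ℕ) : Set (Finset ℕ) :=
  {x | ∃ v : Finset (Fin n), v.Nonempty ∧ x = v.biUnion t}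

/-- the meshing graph of `t` w.r.t. `s` is complete: any two distinct members of `t`
contain members of `s` which mesh. -/
def CompleteMesh (s : ℕ → Finset ℕ) {n : ℕ} (t : Fin n → Finset ℕ) : Prop :=
  ∀ i j : Fin n, i ≠ j → ∃ m k, s m ⊆ t i ∧ s k ⊆ t j ∧ Mesh (s m) (s k)

/-- `A` is `s`-meshed: for every `n` there is an `n`-witness, i.e. a disjoint sequence of
length `n` whose FU-set lies in `FU s ∩ A` and whose meshing graph is complete. -/
def SMeshed (s : ℕ → Finset ℕ) (A : Set (Finset ℕ)) : Prop :=
  ∀ n : ℕ, ∃ t : Fin n → Finset ℕ, (∀ i, (t i).Nonempty) ∧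
    Pairwise (Function.onFun Disjoint t) ∧ FUfin t ⊆ FU s ∩ A ∧ CompleteMesh s t

/-- the minimum of a finite set of naturals (0 for the empty set). -/
noncomputable def fmin (v : Finset ℕ) : ℕ := sInf (↑v : Set ℕ)

/-- the maximum of a finite set of naturals (0 for the empty set). -/
noncomputable def fmax (v : Finset ℕ) : ℕ := sSup (↑v : Set ℕ)

lemma fmin_mem {v : Finset ℕ} (h : v.Nonempty) : fmin v ∈ v := by
  have h1 : (↑v : Set ℕ).Nonempty := by exact_mod_cast h
  simpa [fmin] using Nat.sInf_mem h1

lemma fmin_le {v : Finset ℕ} {a : ℕ} (h : a ∈ v) : fmin v ≤ a :=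
  Nat.sInf_le (by exact_mod_cast h)

lemma fmax_mem {v : Finset ℕ} (h : v.Nonempty) : fmax v ∈ v := by
  have h1 : (↑v : Set ℕ).Nonempty := by exact_mod_cast h
  simpa [fmax] using h1.csSup_mem v.finite_toSet

lemma le_fmax {v : Finset ℕ} {a : ℕ} (h : a ∈ v) : a ≤ fmax v :=
  le_csSup v.finite_toSet.bddAbove (by exact_mod_cast h)

lemma bad_finite (s : ℕ → Finset ℕ) (hs : Pairwise (Function.onFun Disjoint s)) (m : ℕ) :
    {j | ∃ x ∈ s j, x ≤ m}.Finite := by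
  have hsub : {j | ∃ x ∈ s j, x ≤ m} ⊆ ⋃ x ∈ Set.Iic m, {j | x ∈ s j} := by
    rintro j ⟨x, hx, hxm⟩
    exact Set.mem_biUnion hxm hx
  refine Set.Finite.subset (Set.Finite.biUnion (Set.finite_Iic m) ?_) hsub
  intro x _
  apply Set.Subsingleton.finite
  intro j hj j' hj'
  by_contra hne
  exact Finset.disjoint_left.mp (hs hne) hj hj'


/-- If `A` meets `min[FU s]` infinitely and `B` meets `max[FU s]` infinitely, then
`min⁻¹[A] ∩ max⁻¹[B]` is `s`-meshed. -/
theorem preimages_meshed (s : ℕ → Finset ℕ) (hs : IsDisjointSeq s)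
    (harb : ∀ n N : ℕ, ∃ i : Fin n → ℕ, StrictMono i ∧ (∀ k, N < i k) ∧
      CompleteMesh s (fun k => s (i k)))
    (A B : Set ℕ)
    (hA : (A ∩ fmin '' FU s).Infinite) (hB : (B ∩ fmax '' FU s).Infinite) :
    SMeshed s {v | fmin v ∈ A ∧ fmax v ∈ B} := by
  obtain ⟨hne, hdisj⟩ := hs
  have hdisj' : ∀ a b : ℕ, a ≠ b → Disjoint (s a) (s b) := fun a b h => hdisj h
  -- the set of indices whose block has min in A is infinite
  have hJA : {j | fmin (s j) ∈ A}.Infinite := by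
    apply Set.Infinite.of_image (fun j => fmin (s j))
    apply hA.mono
    rintro a ⟨haA, u, ⟨v, hv, rfl⟩, rfl⟩
    obtain ⟨k, hk⟩ := hv
    have hxne : (v.biUnion s).Nonempty :=
      ⟨(hne k).choose, Finset.mem_biUnion.mpr ⟨k, hk, (hne k).choose_spec⟩⟩
    obtain ⟨j, hjv, hj⟩ := Finset.mem_biUnion.mp (fmin_mem hxne)
    have heq : fmin (s j) = fmin (v.biUnion s) :=
      le_antisymm (fmin_le hj)
        (fmin_le (Finset.mem_biUnion.mpr ⟨j, hjv, fmin_mem (hne j)⟩))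
    exact ⟨j, by simp only [Set.mem_setOf_eq]; rw [heq]; exact haA, heq⟩
  have hJB : {j | fmax (s j) ∈ B}.Infinite := by
    apply Set.Infinite.of_image (fun j => fmax (s j))
    apply hB.mono
    rintro a ⟨haB, u, ⟨v, hv, rfl⟩, rfl⟩
    obtain ⟨k, hk⟩ := hv
    have hxne : (v.biUnion s).Nonempty :=
      ⟨(hne k).choose, Finset.mem_biUnion.mpr ⟨k, hk, (hne k).choose_spec⟩⟩
    obtain ⟨j, hjv, hj⟩ := Finset.mem_biUnion.mp (fmax_mem hxne)
    have heq : fmax (s j) = fmax (v.biUnion s) :=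
      le_antisymm (le_fmax (Finset.mem_biUnion.mpr ⟨j, hjv, fmax_mem (hne j)⟩)) (le_fmax hj)
    exact ⟨j, by simp only [Set.mem_setOf_eq]; rw [heq]; exact haB, heq⟩
  -- beyond some index, all blocks have all elements large
  have hbad : ∀ m : ℕ, ∃ N : ℕ, ∀ j, N < j → ∀ x ∈ s j, m < x := by
    intro m
    obtain ⟨N, hN⟩ := (bad_finite s hdisj m).bddAbove
    refine ⟨N, fun j hj x hx => ?_⟩
    by_contra h
    exact absurd (hN ⟨x, hx, le_of_not_gt h⟩) (not_le.mpr hj)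
  -- injective choice out of an infinite set
  have hchoose : ∀ (S : Set ℕ), S.Infinite → ∀ n : ℕ,
      ∃ f : Fin n → ℕ, Function.Injective f ∧ ∀ k, f k ∈ S := by
    intro S hS n
    let e := Set.Infinite.natEmbedding _ hS
    refine ⟨fun k => (e (k : ℕ) : ℕ), ?_, fun k => (e (k : ℕ)).2⟩
    intro k k' h
    exact Fin.val_injective (e.injective (Subtype.ext h))
  intro n
  obtain ⟨α, hαinj, hαJA⟩ := hchoose _ hJA n
  set m := (Finset.univ.biUnion fun k : Fin n => s (α k)).sup id with hm
  have hαle : ∀ k, ∀ x ∈ s (α k), x ≤ m := fun k x hx =>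
    Finset.le_sup (f := id) (Finset.mem_biUnion.mpr ⟨k, Finset.mem_univ k, hx⟩)
  obtain ⟨N, hN⟩ := hbad m
  obtain ⟨i, hiSM, hiN, hiCM⟩ := harb n N
  have hiGT : ∀ k, ∀ x ∈ s (i k), m < x := fun k => hN (i k) (hiN k)
  set M := (Finset.univ.biUnion fun k : Fin n => s (α k) ∪ s (i k)).sup id with hM
  have hαM : ∀ k, ∀ x ∈ s (α k), x ≤ M := fun k x hx =>
    Finset.le_sup (f := id)
      (Finset.mem_biUnion.mpr ⟨k, Finset.mem_univ k, Finset.mem_union_left _ hx⟩)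
  have hiM : ∀ k, ∀ x ∈ s (i k), x ≤ M := fun k x hx =>
    Finset.le_sup (f := id)
      (Finset.mem_biUnion.mpr ⟨k, Finset.mem_univ k, Finset.mem_union_right _ hx⟩)
  have hmM : m ≤ M := by
    apply Finset.sup_le
    intro x hx
    obtain ⟨k, -, hk⟩ := Finset.mem_biUnion.mp hx
    exact hαM k x hk
  obtain ⟨N2, hN2⟩ := hbad M
  obtain ⟨β, hβinj, hβmem⟩ := hchoose _ (hJB.diff (Set.finite_Iic N2)) n
  have hβJB : ∀ k, fmax (s (β k)) ∈ B := fun k => (hβmem k).1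
  have hβGT : ∀ k, ∀ x ∈ s (β k), M < x := fun k => hN2 (β k) (not_le.mp (hβmem k).2)
  -- index distinctness
  have hαi : ∀ k k', α k ≠ i k' := by
    intro k k' h
    obtain ⟨x, hx⟩ := hne (α k)
    have h1 := hαle k x hx
    have h2 := hiGT k' x (h ▸ hx)
    omega
  have hαβ : ∀ k k', α k ≠ β k' := by
    intro k k' h
    obtain ⟨x, hx⟩ := hne (α k)
    have h1 := hαle k x hx
    have h2 := hβGT k' x (h ▸ hx)
    omega
  have hiβ : ∀ k k', i k ≠ β k' := by
    intro k k' h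
    obtain ⟨x, hx⟩ := hne (i k)
    have h1 := hiM k x hx
    have h2 := hβGT k' x (h ▸ hx)
    omega
  set t : Fin n → Finset ℕ := fun k => s (α k) ∪ s (i k) ∪ s (β k) with ht
  have hαt : ∀ k, s (α k) ⊆ t k := fun k =>
    Finset.subset_union_left.trans Finset.subset_union_left
  have hit : ∀ k, s (i k) ⊆ t k := fun k =>
    Finset.subset_union_right.trans Finset.subset_union_left
  have hβt : ∀ k, s (β k) ⊆ t k := fun k => Finset.subset_union_right
  refine ⟨t, ?_, ?_, ?_, ?_⟩
  · intro k
    exact (hne (α k)).mono (hαt k)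
  · intro k k' hkk'
    simp only [Function.onFun, ht]
    refine Finset.disjoint_union_left.mpr ⟨Finset.disjoint_union_left.mpr ⟨?_, ?_⟩, ?_⟩ <;>
      refine Finset.disjoint_union_right.mpr ⟨Finset.disjoint_union_right.mpr ⟨?_, ?_⟩, ?_⟩
    · exact hdisj' _ _ (fun h => hkk' (hαinj h))
    · exact hdisj' _ _ (hαi k k')
    · exact hdisj' _ _ (hαβ k k')
    · exact hdisj' _ _ (fun h => hαi k' k h.symm)
    · exact hdisj' _ _ (fun h => hkk' (hiSM.injective h))
    · exact hdisj' _ _ (hiβ k k')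
    · exact hdisj' _ _ (fun h => hαβ k' k h.symm)
    · exact hdisj' _ _ (fun h => hiβ k' k h.symm)
    · exact hdisj' _ _ (fun h => hkk' (hβinj h))
  · rintro x ⟨v, hv, rfl⟩
    obtain ⟨k₀, hk₀⟩ := hv
    have htx : ∀ k ∈ v, t k ⊆ v.biUnion t := fun k hk => Finset.subset_biUnion_of_mem t hk
    have hx_ne : (v.biUnion t).Nonempty :=
      ⟨(hne (α k₀)).choose, htx k₀ hk₀ (hαt k₀ (hne (α k₀)).choose_spec)⟩
    refine ⟨⟨v.biUnion (fun k => ({α k, i k, β k} : Finset ℕ)), ?_, ?_⟩, ?_, ?_⟩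
    · exact ⟨α k₀, Finset.mem_biUnion.mpr ⟨k₀, hk₀, by simp⟩⟩
    · ext a
      simp only [Finset.mem_biUnion, Finset.mem_union, Finset.mem_insert,
        Finset.mem_singleton, ht]
      constructor
      · rintro ⟨k, hk, (h | h) | h⟩
        · exact ⟨α k, ⟨k, hk, Or.inl rfl⟩, h⟩
        · exact ⟨i k, ⟨k, hk, Or.inr (Or.inl rfl)⟩, h⟩
        · exact ⟨β k, ⟨k, hk, Or.inr (Or.inr rfl)⟩, h⟩
      · rintro ⟨j, ⟨k, hk, (rfl | rfl | rfl)⟩, h⟩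
        · exact ⟨k, hk, Or.inl (Or.inl h)⟩
        · exact ⟨k, hk, Or.inl (Or.inr h)⟩
        · exact ⟨k, hk, Or.inr h⟩
    · -- fmin ∈ A
      obtain ⟨k, hkv, hk⟩ := Finset.mem_biUnion.mp (fmin_mem hx_ne)
      have hle : fmin (v.biUnion t) ≤ fmin (s (α k)) :=
        fmin_le (htx k hkv (hαt k (fmin_mem (hne (α k)))))
      have hlem : fmin (v.biUnion t) ≤ m := hle.trans (hαle k _ (fmin_mem (hne (α k))))
      rcases Finset.mem_union.mp hk with hk' | hk'
      · rcases Finset.mem_union.mp hk' with h1 | h1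
        · have heq : fmin (v.biUnion t) = fmin (s (α k)) := le_antisymm hle (fmin_le h1)
          rw [heq]
          exact hαJA k
        · exact absurd hlem (not_le.mpr (hiGT k _ h1))
      · have := hβGT k _ hk'
        omega
    · -- fmax ∈ B
      obtain ⟨k, hkv, hk⟩ := Finset.mem_biUnion.mp (fmax_mem hx_ne)
      have hge : fmax (s (β k)) ≤ fmax (v.biUnion t) :=
        le_fmax (htx k hkv (hβt k (fmax_mem (hne (β k)))))
      have hgeM : M < fmax (v.biUnion t) :=
        lt_of_lt_of_le (hβGT k _ (fmax_mem (hne (β k)))) hge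
      rcases Finset.mem_union.mp hk with hk' | hk'
      · rcases Finset.mem_union.mp hk' with h1 | h1
        · have := hαM k _ h1
          omega
        · have := hiM k _ h1
          omega
      · have heq : fmax (v.biUnion t) = fmax (s (β k)) := le_antisymm (le_fmax hk') hge
        rw [heq]
        exact hβJB k
  · intro k k' hkk'
    obtain ⟨m', k'', h1, h2, h3⟩ := hiCM k k' hkk'
    exact ⟨m', k'', h1.trans (hit k), h2.trans (hit k'), h3⟩
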